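/- Let (A,[·,·]) be a finite-dimensional Lie algebra over a field K of characteristic zero, and ω a nondegenerate skew-symmetric bilinear form on A satisfying ω([u,v],w) + ω([v,w],u) + ω([w,u],v) = 0 for all u,v,w. Let I be a subspace of the center Z(A) with ω(I,I) = 0, let T : A×A×A → K be a trilinear form invariant under all permutations of its arguments such that T(u,v,w) = 0 whenever u ∈ I^⊥, and let ρ : A×A → A be the bilinear map determined by ω(ρ(u,v), w) = T(u,v,w) for all w. Then the product u•v := [u,v] + ρ(u,v) satisfies both the left and the right Leibniz identities, and ω satisfies both ω(u, v•w) − ω(v, u•w) = (1/2)ω(u•v, w) − (1/2)ω(v•u, w) and ω(u, w•v) − ω(v, w•u) = (1/2)ω(v•u, w) − (1/2)ω(u•v, w) for all u,v,w ∈ A. -/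

import Mathlib

/-- Given a symplectic Lie algebra `(A, [·,·], ω)`, a totally isotropic
subspace `I` of the center, a fully symmetric trilinear form `T` vanishing whenever
its first argument lies in `I^⊥`, and `ρ` defined by `ω(ρ(u,v), w) = T(u,v,w)`,
the product `u•v = [u,v] + ρ(u,v)` is both left and right Leibniz and `ω` satisfies
both the left and the right symplectic conditions. -/
theorem stmt10 {K A : Type*} [Field K] [CharZero K] [AddCommGroup A] [Module K A]
    [FiniteDimensional K A]
    (brk : A →ₗ[K] A →ₗ[K] A)
    (hanti : ∀ u v : A, brk u v = - brk v u)
    (hjac : ∀ u v w : A, brk (brk u v) w + brk (brk v w) u + brk (brk w u) v = 0)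
    (ω : A →ₗ[K] A →ₗ[K] K)
    (hskew : ∀ u v : A, ω u v = - ω v u)
    (hnondeg : ∀ u : A, (∀ v : A, ω u v = 0) → u = 0)
    (hclosed : ∀ u v w : A, ω (brk u v) w + ω (brk v w) u + ω (brk w u) v = 0)
    (I : Submodule K A)
    (hIcent : ∀ x ∈ I, ∀ y : A, brk x y = 0)
    (hIiso : ∀ x ∈ I, ∀ y ∈ I, ω x y = 0)
    (T : A →ₗ[K] A →ₗ[K] A →ₗ[K] K)
    (hT12 : ∀ u v w : A, T u v w = T v u w)
    (hT23 : ∀ u v w : A, T u v w = T u w v)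
    (hTperp : ∀ u : A, (∀ s ∈ I, ω u s = 0) → ∀ v w : A, T u v w = 0)
    (ρ : A →ₗ[K] A →ₗ[K] A)
    (hρ : ∀ u v w : A, ω (ρ u v) w = T u v w)
    (mul : A → A → A)
    (hmul : ∀ u v : A, mul u v = brk u v + ρ u v) :
    (∀ u v w : A, mul u (mul v w) = mul (mul u v) w + mul v (mul u w)) ∧
      (∀ u v w : A, mul (mul v w) u = mul (mul v u) w + mul v (mul w u)) ∧
      (∀ u v w : A, ω u (mul v w) - ω v (mul u w)
        = (1/2 : K) * ω (mul u v) w - (1/2 : K) * ω (mul v u) w) ∧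
      (∀ u v w : A, ω u (mul w v) - ω v (mul w u)
        = (1/2 : K) * ω (mul v u) w - (1/2 : K) * ω (mul u v) w) := by

  -- ω is reflexive as a bilinear form
  have hrefl : LinearMap.IsRefl ω := fun x y h => by rw [hskew]; rw [h]; ring
  -- brackets lie in I^⊥
  have hbrkI : ∀ u v : A, ∀ s ∈ I, ω (brk u v) s = 0 := by
    intro u v s hs
    have h := hclosed u v s
    have h1 : brk v s = 0 := by rw [hanti, hIcent s hs]; simp
    have h2 : brk s u = 0 := hIcent s hs u
    rw [h1, h2] at h
    simpa using h
  -- ρ u v lies in I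
  have hρI : ∀ u v : A, ρ u v ∈ I := by
    intro u v
    have hmem : ρ u v ∈ LinearMap.BilinForm.orthogonal ω (LinearMap.BilinForm.orthogonal ω I) := by
      intro n hn
      have hnI : ∀ s ∈ I, ω n s = 0 := by
        intro s hs
        have := hn s hs
        rw [hskew]; rw [this]; ring
      have hT : T u v n = 0 := by
        rw [hT23, hT12]; exact hTperp n hnI u v
      have : ω (ρ u v) n = 0 := by rw [hρ]; exact hT
      exact hrefl _ _ this
    rwa [LinearMap.BilinForm.orthogonal_orthogonal (hrefl.nondegenerate_iff_separatingLeft.mpr hnondeg) hrefl I] at hmem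
  -- hence ρ u v is central
  have hbrkρ : ∀ u v x : A, brk (ρ u v) x = 0 := fun u v x => hIcent _ (hρI u v) x
  have hbrkρ' : ∀ u v x : A, brk x (ρ u v) = 0 := by
    intro u v x; rw [hanti, hbrkρ]; simp
  -- ρ u v is in I^⊥ (isotropy)
  have hρperp : ∀ u v : A, ∀ s ∈ I, ω (ρ u v) s = 0 :=
    fun u v s hs => hIiso _ (hρI u v) s hs
  -- ρ vanishes when an argument is in I^⊥
  have hρz : ∀ x : A, (∀ s ∈ I, ω x s = 0) → ∀ y : A, ρ x y = 0 ∧ ρ y x = 0 := by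
    intro x hx y
    constructor
    · apply hnondeg
      intro w
      rw [hρ]; exact hTperp x hx y w
    · apply hnondeg
      intro w
      rw [hρ, hT12]; exact hTperp x hx y w
  have hρbrk : ∀ u v y : A, ρ (brk u v) y = 0 := fun u v y => (hρz _ (hbrkI u v) y).1
  have hρbrk' : ∀ u v y : A, ρ y (brk u v) = 0 := fun u v y => (hρz _ (hbrkI u v) y).2
  have hρρ : ∀ u v y : A, ρ (ρ u v) y = 0 := fun u v y => (hρz _ (hρperp u v) y).1
  have hρρ' : ∀ u v y : A, ρ y (ρ u v) = 0 := fun u v y => (hρz _ (hρperp u v) y).2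
  -- products collapse
  have hmm : ∀ u v w : A, mul u (mul v w) = brk u (brk v w) := by
    intro u v w
    rw [hmul, hmul, map_add, map_add, hbrkρ', hρρ', hρbrk']
    simp
  have hmm' : ∀ u v w : A, mul (mul u v) w = brk (brk u v) w := by
    intro u v w
    rw [hmul, hmul]
    simp only [map_add, LinearMap.add_apply, hbrkρ, hρρ, hρbrk,
      LinearMap.zero_apply]
    simp
  -- Jacobi identities in Leibniz form
  have hjacL : ∀ u v w : A, brk u (brk v w) = brk (brk u v) w + brk v (brk u w) := by
    intro u v w
    have h := hjac u v w
    have e1 : brk u (brk v w) = - brk (brk v w) u := hanti _ _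
    have e2 : brk v (brk u w) = brk (brk w u) v := by
      rw [hanti v (brk u w), hanti u w]
      simp
    rw [e1, e2]
    rw [eq_comm, ← sub_eq_zero]
    rw [show brk (brk u v) w + brk (brk w u) v - -brk (brk v w) u
        = brk (brk u v) w + brk (brk v w) u + brk (brk w u) v by abel]
    exact h
  refine ⟨?_, ?_, ?_, ?_⟩
  · intro u v w
    rw [hmm, hmm, hmm', hjacL]
  · intro u v w
    rw [hmm', hmm', hmm]
    rw [hanti (brk v w) u, hjacL u v w, hanti u v, hanti u w]
    simp only [map_neg, LinearMap.neg_apply, neg_neg]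
    abel
  · intro u v w
    rw [hmul, hmul, hmul, hmul]
    simp only [map_add, LinearMap.add_apply]
    have f1 : ω u (ρ v w) = - T v w u := by rw [hskew, hρ]
    have f2 : ω v (ρ u w) = - T u w v := by rw [hskew, hρ]
    have f3 : T v w u = T u w v := by rw [hT12, hT23, hT12]
    have f4 : ω (ρ u v) w = T u v w := hρ u v w
    have f5 : ω (ρ v u) w = T u v w := by rw [hρ, hT12]
    have f6 : ω (brk v u) w = - ω (brk u v) w := by rw [hanti v u]; simp
    have hw1 : ω u (brk v w) - ω v (brk u w) = ω (brk u v) w := by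
      have h := hclosed u v w
      have e1 : ω u (brk v w) = - ω (brk v w) u := hskew _ _
      have e2 : ω v (brk u w) = ω (brk w u) v := by
        rw [hskew v (brk u w), hanti u w]; simp
      rw [e1, e2]
      linear_combination -h
    linear_combination hw1 + f1 - f2 - f3 + (1/2 : K) * f6 + (1/2 : K) * f5
      - (1/2 : K) * f4
  · intro u v w
    rw [hmul, hmul, hmul, hmul]
    simp only [map_add, LinearMap.add_apply]
    have f1 : ω u (ρ w v) = - T w v u := by rw [hskew, hρ]
    have f2 : ω v (ρ w u) = - T w u v := by rw [hskew, hρ]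
    have f3 : T w v u = T w u v := hT23 _ _ _
    have f4 : ω (ρ u v) w = T u v w := hρ u v w
    have f5 : ω (ρ v u) w = T u v w := by rw [hρ, hT12]
    have f6 : ω (brk v u) w = - ω (brk u v) w := by rw [hanti v u]; simp
    have g1 : ω u (brk w v) = - ω u (brk v w) := by rw [hanti w v]; simp
    have g2 : ω v (brk w u) = - ω v (brk u w) := by rw [hanti w u]; simp
    have hw1 : ω u (brk v w) - ω v (brk u w) = ω (brk u v) w := by
      have h := hclosed u v w
      have e1 : ω u (brk v w) = - ω (brk v w) u := hskew _ _
      have e2 : ω v (brk u w) = ω (brk w u) v := by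
        rw [hskew v (brk u w), hanti u w]; simp
      rw [e1, e2]
      linear_combination -h
    linear_combination -hw1 + f1 - f2 - f3 - (1/2 : K) * f6 - (1/2 : K) * f5
      + (1/2 : K) * f4 + g1 - g2
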